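/- Let A be a synaptic algebra and let q, r be projections in A (q = q², r = r²). Then q ≤ r if and only if q ≤ₛ r, where ≤ₛ is the spectral order. -/

import Mathlib

open Filter Topology

/-- The order-unit norm associated with an order relation `le` on a real algebra:
`‖a‖ = inf {λ > 0 : −λ ≤ a ≤ λ}`. -/
noncomputable def ouNorm {R : Type*} [Ring R] [Algebra ℝ R] (le : R → R → Prop) (a : R) : ℝ :=
  sInf {l : ℝ | 0 < l ∧ le (algebraMap ℝ R (-l)) a ∧ le a (algebraMap ℝ R l)}

/-- A synaptic algebra: a real linear subspace `A` (containing `1`) of a unital associative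
algebra `R` over `ℝ` (a complex algebra is in particular a real algebra), equipped with a
partial order making it an Archimedean partially ordered real linear space with order unit `1`,
and satisfying axioms SA1–SA8.  The square root (SA5) and the carrier (SA6) are bundled as
data together with their defining properties. -/
structure SynapticAlgebra (R : Type*) [Ring R] [Algebra ℝ R] where
  A : Submodule ℝ R
  one_mem : (1 : R) ∈ A
  /-- the synaptic order (meaningful on elements of `A`) -/
  le : R → R → Prop
  -- SA1 : Archimedean partially ordered real linear space with order unit 1
  le_refl : ∀ a ∈ A, le a a
  le_antisymm : ∀ a ∈ A, ∀ b ∈ A, le a b → le b a → a = b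
  le_trans : ∀ a ∈ A, ∀ b ∈ A, ∀ c ∈ A, le a b → le b c → le a c
  add_le_add_right : ∀ a ∈ A, ∀ b ∈ A, ∀ c ∈ A, le a b → le (a + c) (b + c)
  smul_nonneg : ∀ r : ℝ, 0 ≤ r → ∀ a ∈ A, le 0 a → le 0 (r • a)
  arch : ∀ a ∈ A, ∀ b ∈ A, (∀ n : ℕ, le ((n : ℝ) • a) b) → le a 0
  one_order_unit : ∀ a ∈ A, ∃ n : ℕ, le a ((n : ℝ) • (1 : R))
  zero_ne_one : (0 : R) ≠ 1
  -- SA2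
  sq_mem : ∀ a ∈ A, a * a ∈ A
  sq_nn : ∀ a ∈ A, le 0 (a * a)
  -- SA3
  quad_mem : ∀ a ∈ A, ∀ b ∈ A, a * b * a ∈ A
  quad_nn : ∀ a ∈ A, ∀ b ∈ A, le 0 a → le 0 b → le 0 (a * b * a)
  -- SA4
  quad_zero : ∀ a ∈ A, ∀ b ∈ A, le 0 b → a * b * a = 0 → a * b = 0 ∧ b * a = 0
  -- SA5 : square roots
  sqrt : R → R
  sqrt_mem : ∀ a ∈ A, le 0 a → sqrt a ∈ A
  sqrt_nn : ∀ a ∈ A, le 0 a → le 0 (sqrt a)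
  sqrt_sq : ∀ a ∈ A, le 0 a → sqrt a * sqrt a = a
  sqrt_bicomm : ∀ a ∈ A, le 0 a → ∀ b ∈ A, a * b = b * a → sqrt a * b = b * sqrt a
  sqrt_unique : ∀ a ∈ A, le 0 a → ∀ b ∈ A, le 0 b → b * b = a →
    (∀ c ∈ A, a * c = c * a → b * c = c * b) → b = sqrt a
  -- SA6 : carriers
  carr : R → R
  carr_mem : ∀ a ∈ A, carr a ∈ A
  carr_idem : ∀ a ∈ A, carr a * carr a = carr a
  carr_spec : ∀ a ∈ A, ∀ b ∈ A, (a * b = 0 ↔ carr a * b = 0)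
  -- SA7
  inv_exists : ∀ a ∈ A, le 1 a → ∃ b ∈ A, a * b = 1 ∧ b * a = 1
  -- SA8
  comm_closed : ∀ a ∈ A, ∀ b ∈ A, ∀ f : ℕ → R, (∀ n, f n ∈ A) →
    (∀ n, le (f n) (f (n + 1))) → (∀ m n, f m * f n = f n * f m) →
    (∀ n, f n * b = b * f n) →
    Filter.Tendsto (fun n => ouNorm le (a - f n)) Filter.atTop (nhds 0) →
    a * b = b * a

namespace SynapticAlgebra

variable {R : Type*} [Ring R] [Algebra ℝ R] (S : SynapticAlgebra R)

/-- `|a| := (a²)^{1/2}`. -/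
def absval (a : R) : R := S.sqrt (a * a)

/-- The positive part `a⁺ := (|a| + a)/2`. -/
noncomputable def pospart (a : R) : R := (2⁻¹ : ℝ) • (S.absval a + a)

/-- The spectral resolution `p_{a,λ} := 1 − ((a − λ)⁺)°`. -/
noncomputable def specProj (a : R) (l : ℝ) : R :=
  1 - S.carr (S.pospart (a - algebraMap ℝ R l))

/-- The spectral order: `a ≤ₛ b` iff `p_{b,λ} ≤ p_{a,λ}` for all real `λ`. -/
noncomputable def specLE (a b : R) : Prop :=
  ∀ l : ℝ, S.le (S.specProj b l) (S.specProj a l)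

/-- Projections of the synaptic algebra. -/
def IsProj (p : R) : Prop := p ∈ S.A ∧ p * p = p

/-- The set `E = {e ∈ A : 0 ≤ e ≤ 1}` of effects. -/
def effects : Set R := {e | e ∈ S.A ∧ S.le 0 e ∧ S.le e 1}

/-- `p` is the infimum of the set `T` in the orthomodular lattice `P` of projections. -/
def IsProjInf (p : R) (T : Set R) : Prop :=
  S.IsProj p ∧ (∀ q ∈ T, S.le p q) ∧ ∀ r, S.IsProj r → (∀ q ∈ T, S.le r q) → S.le r p

/-- `p` is the supremum of the set `T` in the orthomodular lattice `P` of projections. -/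
def IsProjSup (p : R) (T : Set R) : Prop :=
  S.IsProj p ∧ (∀ q ∈ T, S.le q p) ∧ ∀ r, S.IsProj r → (∀ q ∈ T, S.le q r) → S.le p r

/-- A Banach (norm-complete) synaptic algebra: every Cauchy sequence in `A`
(w.r.t. the order-unit norm) converges in norm to an element of `A`. -/
noncomputable def IsBanach : Prop :=
  ∀ f : ℕ → R, (∀ n, f n ∈ S.A) →
    (∀ ε : ℝ, 0 < ε → ∃ N : ℕ, ∀ m ≥ N, ∀ n ≥ N, ouNorm S.le (f m - f n) < ε) →
    ∃ a ∈ S.A, Filter.Tendsto (fun n => ouNorm S.le (a - f n)) Filter.atTop (nhds 0)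

/-- The `λ`-eigenprojection `d_{a,λ} := 1 − (a − λ)°`. -/
noncomputable def eigenProj (a : R) (l : ℝ) : R := 1 - S.carr (a - algebraMap ℝ R l)

/-- The bicommutant `CC(a)` (within `A`). -/
def Bicomm (a : R) : Set R :=
  {b | b ∈ S.A ∧ ∀ c ∈ S.A, a * c = c * a → b * c = c * b}

/-- Projections `p` and `q` are exchanged by a symmetry (`s² = 1`, `sps = q`). -/
def ExchBySymm (p q : R) : Prop := ∃ s ∈ S.A, s * s = 1 ∧ s * p * s = q

/-- The dimension equivalence on projections: a finite chain of projections, consecutive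
ones exchanged by symmetries. -/
def DimEquiv (p q : R) : Prop :=
  ∃ (n : ℕ) (c : ℕ → R), c 0 = p ∧ c n = q ∧ (∀ i ≤ n, S.IsProj (c i)) ∧
    ∀ i < n, S.ExchBySymm (c i) (c (i + 1))

/-- `A` is of finite type iff every projection is finite. -/
def FiniteType : Prop :=
  ∀ p, S.IsProj p → ∀ q, S.IsProj q → S.DimEquiv q p → S.le q p → q = p

/-- The projection lattice `P` is a complete orthomodular lattice: every set of projections
has an infimum and a supremum in `P`. -/
def ProjComplete : Prop :=
  ∀ T : Set R, (∀ p ∈ T, S.IsProj p) →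
    (∃ q, S.IsProjInf q T) ∧ (∃ q, S.IsProjSup q T)

/-- A bounded resolution of identity with bound `K`. -/
def IsBoundedResId (p : ℝ → R) (K : ℝ) : Prop :=
  0 ≤ K ∧ (∀ l, S.IsProj (p l)) ∧
  (∀ l, l < -K → p l = 0) ∧ (∀ l, K ≤ l → p l = 1) ∧
  (∀ l l', l ≤ l' → S.le (p l) (p l')) ∧
  (∀ l, S.IsProjInf (p l) {x | ∃ l' > l, x = p l'})

end SynapticAlgebra

/-- `c` is a regular involution on the subset `T` of the poset `(T, le')`. -/
def IsRegInvPoset {R : Type*} (le' : R → R → Prop) (T : Set R) (c : R → R) : Prop :=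
  (∀ a ∈ T, c a ∈ T) ∧ (∀ a ∈ T, c (c a) = a) ∧
  (∀ a ∈ T, ∀ b ∈ T, le' a b → le' (c b) (c a)) ∧
  (∀ a ∈ T, ∀ b ∈ T, le' a (c a) → le' b (c b) → le' a (c b))

/-- `(T, le', c, 0, 1)` is a Kleene poset: a bounded poset with a regular involution. -/
def IsKleene {R : Type*} [Zero R] [One R] (le' : R → R → Prop) (T : Set R) (c : R → R) : Prop :=
  IsRegInvPoset le' T c ∧ (0 : R) ∈ T ∧ (1 : R) ∈ T ∧ ∀ a ∈ T, le' 0 a ∧ le' a 1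

/-- Every pair of elements of `T` has an infimum and a supremum in `(T, le')`. -/
def HasBinSupInf {R : Type*} (le' : R → R → Prop) (T : Set R) : Prop :=
  ∀ a ∈ T, ∀ b ∈ T,
    (∃ m ∈ T, le' m a ∧ le' m b ∧ ∀ x ∈ T, le' x a → le' x b → le' x m) ∧
    (∃ j ∈ T, le' a j ∧ le' b j ∧ ∀ x ∈ T, le' a x → le' b x → le' j x)

-- AUX START
namespace SynapticAlgebra
variable {R : Type*} [Ring R] [Algebra ℝ R] (S : SynapticAlgebra R)

lemma le_zero_one' : S.le 0 1 := by
  have h := S.sq_nn 1 S.one_mem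
  rwa [mul_one] at h

lemma nonneg_add' {a b : R} (ha : a ∈ S.A) (hb : b ∈ S.A)
    (h0a : S.le 0 a) (h0b : S.le 0 b) : S.le 0 (a + b) := by
  have h1 := S.add_le_add_right 0 S.A.zero_mem a ha b hb h0a
  rw [zero_add] at h1
  exact S.le_trans 0 S.A.zero_mem b hb (a + b) (S.A.add_mem ha hb) h0b h1

lemma proj_nonneg' {p : R} (hp : S.IsProj p) : S.le 0 p := by
  have h := S.sq_nn p hp.1; rwa [hp.2] at h

lemma isProj_one_sub' {p : R} (hp : S.IsProj p) : S.IsProj (1 - p) := by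
  refine ⟨S.A.sub_mem S.one_mem hp.1, ?_⟩
  simp only [mul_sub, sub_mul, one_mul, mul_one, hp.2]
  abel

lemma eq_zero_of_sq' {x : R} (hx : x ∈ S.A) (h : x * x = 0) : x = 0 := by
  have h2 := (S.quad_zero x hx 1 S.one_mem S.le_zero_one' (by rwa [mul_one])).1
  rwa [mul_one] at h2

lemma smul_cancel' {r : ℝ} (hr : r ≠ 0) {x : R} (h : r • x = 0) : x = 0 := by
  have h2 := congrArg (fun y => r⁻¹ • y) h
  simpa [smul_smul, inv_mul_cancel₀ hr] using h2

lemma carr_smul_proj' {p : R} (hp : S.IsProj p) {μ : ℝ} (hμ : μ ≠ 0) :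
    S.carr (μ • p) = p := by
  have hcA : μ • p ∈ S.A := S.A.smul_mem μ hp.1
  set e := S.carr (μ • p) with he
  have heA : e ∈ S.A := S.carr_mem _ hcA
  have hee : e * e = e := S.carr_idem _ hcA
  have h1 : (μ • p) * (1 - e) = 0 := by
    refine (S.carr_spec _ hcA (1 - e) (S.A.sub_mem S.one_mem heA)).mpr ?_
    rw [mul_sub, mul_one, ← he, hee, sub_self]
  have hpe : p * e = p := by
    have h2 : μ • (p * (1 - e)) = 0 := by rwa [← smul_mul_assoc]
    have h3 := smul_cancel' hμ h2
    rw [mul_sub, mul_one, sub_eq_zero] at h3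
    exact h3.symm
  have hep : e * p = e := by
    have h2 : (μ • p) * (1 - p) = 0 := by
      rw [smul_mul_assoc, mul_sub, mul_one, hp.2, sub_self, smul_zero]
    have h3 := (S.carr_spec _ hcA (1 - p) (S.A.sub_mem S.one_mem hp.1)).mp h2
    rw [← he, mul_sub, mul_one, sub_eq_zero] at h3
    exact h3.symm
  have hd : (e - p) * (e - p) = 0 := by
    rw [sub_mul, mul_sub, mul_sub, hee, hp.2, hpe, hep]
    abel
  have := S.eq_zero_of_sq' (S.A.sub_mem heA hp.1) hd
  rw [sub_eq_zero] at this
  exact this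

lemma absval_proj' {p : R} (hp : S.IsProj p) (l : ℝ) :
    S.absval (p - l • 1) = |1 - l| • p + |l| • ((1 : R) - p) := by
  set a := p - l • (1 : R) with ha
  have haA : a ∈ S.A := S.A.sub_mem hp.1 (S.A.smul_mem l S.one_mem)
  have ha2A : a * a ∈ S.A := S.sq_mem a haA
  have ha2nn : S.le 0 (a * a) := S.sq_nn a haA
  set b := |1 - l| • p + |l| • ((1 : R) - p) with hb
  have hbA : b ∈ S.A := S.A.add_mem (S.A.smul_mem _ hp.1)
    (S.A.smul_mem _ (S.A.sub_mem S.one_mem hp.1))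
  have hbnn : S.le 0 b := S.nonneg_add' (S.A.smul_mem _ hp.1)
    (S.A.smul_mem _ (S.A.sub_mem S.one_mem hp.1))
    (S.smul_nonneg _ (abs_nonneg _) p hp.1 (S.proj_nonneg' hp))
    (S.smul_nonneg _ (abs_nonneg _) _ (S.A.sub_mem S.one_mem hp.1)
      (S.proj_nonneg' (S.isProj_one_sub' hp)))
  have ha2 : a * a = (1 - 2*l) • p + (l*l) • (1 : R) := by
    rw [ha]
    simp only [sub_mul, mul_sub, smul_mul_assoc, mul_smul_comm, one_mul, mul_one, hp.2,
      smul_smul]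
    module
  have hb2 : b * b = a * a := by
    have e1 : b * b = (|1 - l| * |1 - l|) • p + (|l| * |l|) • ((1:R) - p) := by
      rw [hb]
      simp only [add_mul, mul_add, sub_mul, mul_sub, smul_mul_assoc, mul_smul_comm, one_mul,
        mul_one, hp.2, smul_smul]
      module
    rw [e1, abs_mul_abs_self, abs_mul_abs_self, ha2]
    module
  have hcomm : ∀ c ∈ S.A, (a*a) * c = c * (a*a) → b * c = c * b := by
    intro c hc hcc
    rw [ha2] at hcc
    simp only [add_mul, mul_add, smul_mul_assoc, mul_smul_comm, one_mul, mul_one] at hcc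
    have hkey : (1 - 2*l) • (p * c - c * p) = 0 := by
      rw [smul_sub, sub_eq_zero]
      exact add_right_cancel hcc
    obtain ⟨t, ht⟩ : ∃ t : ℝ, |1 - l| - |l| = t * (1 - 2*l) := by
      by_cases hl : (1:ℝ) - 2*l = 0
      · refine ⟨0, ?_⟩
        rw [show l = 1/2 from by linarith]
        norm_num
      · exact ⟨(|1 - l| - |l|)/(1 - 2*l), by rw [div_mul_cancel₀ _ hl]⟩
    have hbc : b * c - c * b = (|1 - l| - |l|) • (p * c - c * p) := by
      rw [hb]
      simp only [add_mul, mul_add, sub_mul, mul_sub, smul_mul_assoc, mul_smul_comm, one_mul,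
        mul_one]
      module
    have hz : b * c - c * b = 0 := by
      rw [hbc, ht, ← smul_smul, hkey, smul_zero]
    rw [sub_eq_zero] at hz
    exact hz
  exact (S.sqrt_unique (a*a) ha2A ha2nn b hbA hbnn hb2 hcomm).symm

lemma specProj_proj_neg' {p : R} (hp : S.IsProj p) {l : ℝ} (hl : l < 0) :
    S.specProj p l = 0 := by
  have hl0 : l ≠ 0 := ne_of_lt hl
  set a := p - l • (1 : R) with ha
  have haA : a ∈ S.A := S.A.sub_mem hp.1 (S.A.smul_mem l S.one_mem)
  have hpos : S.pospart (p - algebraMap ℝ R l) = a := by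
    rw [Algebra.algebraMap_eq_smul_one, pospart, ← ha, absval_proj' S hp,
      abs_of_pos (by linarith : (0:ℝ) < 1 - l), abs_of_neg hl, ha]
    module
  rw [specProj, hpos]
  -- show carr a = 1
  have hainv : ∃ binv ∈ S.A, ((-l)⁻¹ • a) * binv = 1 ∧ binv * ((-l)⁻¹ • a) = 1 := by
    apply S.inv_exists _ (S.A.smul_mem _ haA)
    have heq : (-l)⁻¹ • a = (-l)⁻¹ • p + 1 := by
      rw [ha]
      match_scalars
      · ring
      · field_simp
    have h0 : S.le 0 ((-l)⁻¹ • p) :=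
      S.smul_nonneg _ (le_of_lt (inv_pos.mpr (by linarith))) p hp.1 (S.proj_nonneg' hp)
    have h1 := S.add_le_add_right 0 S.A.zero_mem ((-l)⁻¹ • p) (S.A.smul_mem _ hp.1) 1
      S.one_mem h0
    rw [zero_add] at h1
    rwa [heq]
  obtain ⟨binv, hbinvA, hinv1, hinv2⟩ := hainv
  have hcarr : S.carr a = 1 := by
    set x := (1 : R) - S.carr a with hx
    have hxA : x ∈ S.A := S.A.sub_mem S.one_mem (S.carr_mem a haA)
    have hax : a * x = 0 := by
      refine (S.carr_spec a haA x hxA).mpr ?_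
      rw [hx, mul_sub, mul_one, S.carr_idem a haA, sub_self]
    have hax' : ((-l)⁻¹ • a) * x = 0 := by rw [smul_mul_assoc, hax, smul_zero]
    have hx0 : x = 0 := by
      calc x = (binv * ((-l)⁻¹ • a)) * x := by rw [hinv2, one_mul]
      _ = binv * (((-l)⁻¹ • a) * x) := by rw [mul_assoc]
      _ = 0 := by rw [hax', mul_zero]
    rw [hx, sub_eq_zero] at hx0
    exact hx0.symm
  rw [hcarr, sub_self]

lemma specProj_proj_mid' {p : R} (hp : S.IsProj p) {l : ℝ} (hl0 : 0 ≤ l) (hl1 : l < 1) :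
    S.specProj p l = 1 - p := by
  have hpos : S.pospart (p - algebraMap ℝ R l) = (1 - l) • p := by
    rw [Algebra.algebraMap_eq_smul_one, pospart, absval_proj' S hp,
      abs_of_pos (by linarith : (0:ℝ) < 1 - l), abs_of_nonneg hl0]
    module
  rw [specProj, hpos, S.carr_smul_proj' hp (by linarith : (1:ℝ) - l ≠ 0)]

lemma specProj_proj_ge' {p : R} (hp : S.IsProj p) {l : ℝ} (hl : 1 ≤ l) :
    S.specProj p l = 1 := by
  have hcz : S.carr (0 : R) = 0 := by
    have h := (S.carr_spec 0 S.A.zero_mem 1 S.one_mem).mp (zero_mul 1)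
    rwa [mul_one] at h
  have hpos : S.pospart (p - algebraMap ℝ R l) = 0 := by
    rw [Algebra.algebraMap_eq_smul_one, pospart, absval_proj' S hp,
      abs_of_nonpos (by linarith : (1:ℝ) - l ≤ 0), abs_of_pos (by linarith : (0:ℝ) < l)]
    module
  rw [specProj, hpos, hcz, sub_zero]

end SynapticAlgebra


/-- For projections `q, r`, `q ≤ r` iff `q ≤ₛ r`. -/
theorem proj_le_iff_specLE {R : Type*} [Ring R] [Algebra ℝ R]
    (S : SynapticAlgebra R) (q r : R) (hq : S.IsProj q) (hr : S.IsProj r) :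
    S.le q r ↔ S.specLE q r := by
  constructor
  · intro h l
    rcases lt_or_ge l 0 with hl | hl
    · rw [S.specProj_proj_neg' hq hl, S.specProj_proj_neg' hr hl]
      exact S.le_refl 0 S.A.zero_mem
    rcases lt_or_ge l 1 with hl1 | hl1
    · rw [S.specProj_proj_mid' hq hl hl1, S.specProj_proj_mid' hr hl hl1]
      have h2 := S.add_le_add_right q hq.1 r hr.1 (1 - q - r)
        (S.A.sub_mem (S.A.sub_mem S.one_mem hq.1) hr.1) h
      rw [show q + (1 - q - r) = 1 - r from by abel,
        show r + (1 - q - r) = 1 - q from by abel] at h2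
      exact h2
    · rw [S.specProj_proj_ge' hq hl1, S.specProj_proj_ge' hr hl1]
      exact S.le_refl 1 S.one_mem
  · intro h
    have h0 := h 0
    rw [S.specProj_proj_mid' hq le_rfl one_pos, S.specProj_proj_mid' hr le_rfl one_pos] at h0
    have h2 := S.add_le_add_right (1 - r) (S.A.sub_mem S.one_mem hr.1) (1 - q)
      (S.A.sub_mem S.one_mem hq.1) (q + r - 1)
      (S.A.sub_mem (S.A.add_mem hq.1 hr.1) S.one_mem) h0
    rw [show (1:R) - r + (q + r - 1) = q from by abel,
      show (1:R) - q + (q + r - 1) = r from by abel] at h2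
    exact h2
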